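/- No pair of edge patterns (a,b) ∈ S₃ × S₃ of odd length 3 satisfies the cancellation identity: there do not exist a, b ∈ {00,01,10,11}³ and nonzero constant c₀ such that for all positive vectors μ, ν, all ρ ∈ ℝ, and all distinct i₁,i₂,i₃, Ω̃^{a₁}_{i₁i₂}Ω̃^{a₂}_{i₂i₃}Ω̃^{a₃}_{i₃i₁} = e^{c₀ρ}·Ω̃^{b₁}_{i₁i₂}Ω̃^{b₂}_{i₂i₃}Ω̃^{b₃}_{i₃i₁}. -/
import Mathlib

open Real

/-- The "linearized" edge-type matrix entry for a two-bit code `(u,v)`. -/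
noncomputable def OmTilde {n : ℕ} (μ ν : Fin n → ℝ) (ρ : ℝ) :
    Bool × Bool → Fin n → Fin n → ℝ
  | (false, false), _, _ => 1
  | (true, false), i, j => μ i * ν j
  | (false, true), i, j => μ j * ν i
  | (true, true), i, j => exp ρ * (μ i * ν i) * (μ j * ν j)

def bitA (c : Bool × Bool) : ℕ := if c.1 then 1 else 0
def bitB (c : Bool × Bool) : ℕ := if c.2 then 1 else 0
def bitT (c : Bool × Bool) : ℕ := bitA c * bitB c

lemma omtilde_mu {n : ℕ} (μ : Fin n → ℝ) (c : Bool × Bool) (i j : Fin n) :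
    OmTilde μ (fun _ => 1) 0 c i j = μ i ^ bitA c * μ j ^ bitB c := by
  rcases c with ⟨u, v⟩
  rcases u <;> rcases v <;> simp [OmTilde, bitA, bitB]

lemma omtilde_nu {n : ℕ} (ν : Fin n → ℝ) (c : Bool × Bool) (i j : Fin n) :
    OmTilde (fun _ => 1) ν 0 c i j = ν j ^ bitA c * ν i ^ bitB c := by
  rcases c with ⟨u, v⟩
  rcases u <;> rcases v <;> simp [OmTilde, bitA, bitB, mul_comm]

lemma omtilde_exp {n : ℕ} (ρ : ℝ) (c : Bool × Bool) (i j : Fin n) :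
    OmTilde (fun _ => 1) (fun _ => 1) ρ c i j = exp ρ ^ bitT c := by
  rcases c with ⟨u, v⟩
  rcases u <;> rcases v <;> simp [OmTilde, bitA, bitB, bitT]

lemma two_pow_inj {p q : ℕ} (h : (2:ℝ) ^ p = 2 ^ q) : p = q := by
  have h' : (2:ℕ) ^ p = 2 ^ q := by exact_mod_cast h
  exact Nat.pow_right_injective (by norm_num) h'

lemma combo : ∀ a0 a1 a2 b0 b1 b2 : Bool × Bool,
    bitA a0 + bitB a2 = bitA b0 + bitB b2 →
    bitB a0 + bitA a1 = bitB b0 + bitA b1 →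
    bitB a1 + bitA a2 = bitB b1 + bitA b2 →
    bitB a0 + bitA a2 = bitB b0 + bitA b2 →
    bitA a0 + bitB a1 = bitA b0 + bitB b1 →
    bitA a1 + bitB a2 = bitA b1 + bitB b2 →
    bitT a0 + bitT a1 + bitT a2 = bitT b0 + bitT b1 + bitT b2 := by decide

/-- No pair of length-3 edge patterns satisfies the cancellation identity. -/
theorem no_cancellation_pair_odd_length_three :
    ¬ ∃ (a b : Fin 3 → Bool × Bool) (c₀ : ℝ), c₀ ≠ 0 ∧
      ∀ (n : ℕ) (μ ν : Fin n → ℝ), (∀ i, 0 < μ i) → (∀ i, 0 < ν i) →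
        ∀ (ρ : ℝ) (i₁ i₂ i₃ : Fin n), i₁ ≠ i₂ → i₁ ≠ i₃ → i₂ ≠ i₃ →
          OmTilde μ ν ρ (a 0) i₁ i₂ * OmTilde μ ν ρ (a 1) i₂ i₃ *
              OmTilde μ ν ρ (a 2) i₃ i₁ =
            exp (c₀ * ρ) *
              (OmTilde μ ν ρ (b 0) i₁ i₂ * OmTilde μ ν ρ (b 1) i₂ i₃ *
                OmTilde μ ν ρ (b 2) i₃ i₁) := by
  rintro ⟨a, b, c₀, hc₀, h⟩
  have onepos : ∀ i : Fin 3, (0:ℝ) < (fun _ : Fin 3 => (1:ℝ)) i := fun _ => one_pos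
  have pos1 : ∀ i : Fin 3, (0:ℝ) < ![2,1,1] i := by intro i; fin_cases i <;> norm_num
  have pos2 : ∀ i : Fin 3, (0:ℝ) < ![1,2,1] i := by intro i; fin_cases i <;> norm_num
  have pos3 : ∀ i : Fin 3, (0:ℝ) < ![1,1,2] i := by intro i; fin_cases i <;> norm_num
  have e1 : bitA (a 0) + bitB (a 2) = bitA (b 0) + bitB (b 2) := by
    have h' := h 3 ![2,1,1] (fun _ => 1) pos1 onepos 0 0 1 2
      (by decide) (by decide) (by decide)
    simp only [omtilde_mu, Matrix.cons_val_zero, Matrix.cons_val_one, Matrix.head_cons,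
      Matrix.cons_val_two, Matrix.tail_cons, one_pow, one_mul, mul_one,
      mul_zero, exp_zero, ← pow_add] at h'
    exact two_pow_inj h'
  have e2 : bitB (a 0) + bitA (a 1) = bitB (b 0) + bitA (b 1) := by
    have h' := h 3 ![1,2,1] (fun _ => 1) pos2 onepos 0 0 1 2
      (by decide) (by decide) (by decide)
    simp only [omtilde_mu, Matrix.cons_val_zero, Matrix.cons_val_one, Matrix.head_cons,
      Matrix.cons_val_two, Matrix.tail_cons, one_pow, one_mul, mul_one,
      mul_zero, exp_zero, ← pow_add] at h'
    exact two_pow_inj h'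
  have e3 : bitB (a 1) + bitA (a 2) = bitB (b 1) + bitA (b 2) := by
    have h' := h 3 ![1,1,2] (fun _ => 1) pos3 onepos 0 0 1 2
      (by decide) (by decide) (by decide)
    simp only [omtilde_mu, Matrix.cons_val_zero, Matrix.cons_val_one, Matrix.head_cons,
      Matrix.cons_val_two, Matrix.tail_cons, one_pow, one_mul, mul_one,
      mul_zero, exp_zero, ← pow_add] at h'
    exact two_pow_inj h'
  have e4 : bitB (a 0) + bitA (a 2) = bitB (b 0) + bitA (b 2) := by
    have h' := h 3 (fun _ => 1) ![2,1,1] onepos pos1 0 0 1 2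
      (by decide) (by decide) (by decide)
    simp only [omtilde_nu, Matrix.cons_val_zero, Matrix.cons_val_one, Matrix.head_cons,
      Matrix.cons_val_two, Matrix.tail_cons, one_pow, one_mul, mul_one,
      mul_zero, exp_zero, ← pow_add] at h'
    exact two_pow_inj h'
  have e5 : bitA (a 0) + bitB (a 1) = bitA (b 0) + bitB (b 1) := by
    have h' := h 3 (fun _ => 1) ![1,2,1] onepos pos2 0 0 1 2
      (by decide) (by decide) (by decide)
    simp only [omtilde_nu, Matrix.cons_val_zero, Matrix.cons_val_one, Matrix.head_cons,
      Matrix.cons_val_two, Matrix.tail_cons, one_pow, one_mul, mul_one,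
      mul_zero, exp_zero, ← pow_add] at h'
    exact two_pow_inj h'
  have e6 : bitA (a 1) + bitB (a 2) = bitA (b 1) + bitB (b 2) := by
    have h' := h 3 (fun _ => 1) ![1,1,2] onepos pos3 0 0 1 2
      (by decide) (by decide) (by decide)
    simp only [omtilde_nu, Matrix.cons_val_zero, Matrix.cons_val_one, Matrix.head_cons,
      Matrix.cons_val_two, Matrix.tail_cons, one_pow, one_mul, mul_one,
      mul_zero, exp_zero, ← pow_add] at h'
    exact two_pow_inj h'
  have hk := combo (a 0) (a 1) (a 2) (b 0) (b 1) (b 2) e1 e2 e3 e4 e5 e6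
  -- now use ρ = 1 with μ = ν = 1
  have h' := h 3 (fun _ => 1) (fun _ => 1) onepos onepos 1 0 1 2
    (by decide) (by decide) (by decide)
  simp only [omtilde_exp, mul_one, ← pow_add] at h'
  rw [← exp_nat_mul, ← exp_nat_mul, ← exp_add] at h'
  have := exp_injective h'
  apply hc₀
  have : (↑(bitT (a 0) + bitT (a 1) + bitT (a 2)) : ℝ) =
      c₀ + ↑(bitT (b 0) + bitT (b 1) + bitT (b 2)) := by push_cast; push_cast at this; linarith
  rw [hk] at this
  linarith
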